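/- arXiv:2207.07947 — 5 statements merged into one kernel-verified Lean document; each statement's English description precedes it below -/
import Mathlib

section
/- Let n ∈ ℕ and let F and G be two continuous distribution functions on ℝ. Let X_1,…,X_n be i.i.d. with distribution function F and Y_1,…,Y_n be i.i.d. with distribution function G. Then the random variable W_n^*(F; X_1,…,X_n) has the same distribution as W_n^*(G; Y_1,…,Y_n); i.e., the distribution of W_n^* under the hypothesis F = F_0 does not depend on F. -/
open MeasureTheory ProbabilityTheory Filter Topology

open Finset

namespace WstarAux

variable {n : ℕ}

lemma pcne (k : Fin n) : ((Finset.univ : Finset (Fin n)).powersetCard ((k:ℕ)+1)).Nonempty :=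
  Finset.powersetCard_nonempty.2 (by simpa using Nat.succ_le_of_lt k.2)

lemma mem_pc_nonempty {k : Fin n} {S : Finset (Fin n)}
    (hS : S ∈ (Finset.univ : Finset (Fin n)).powersetCard ((k:ℕ)+1)) : S.Nonempty := by
  rw [Finset.mem_powersetCard] at hS
  exact Finset.card_pos.1 (hS.2 ▸ Nat.succ_pos _)

noncomputable def osc (v : Fin n → ℝ) (k : Fin n) : ℝ :=
  (((Finset.univ : Finset (Fin n)).powersetCard ((k:ℕ)+1)).attach.inf'
    (Finset.attach_nonempty_iff.2 (pcne k))
    (fun S => S.1.sup' (mem_pc_nonempty S.2) v))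

lemma osc_le (v : Fin n → ℝ) (k : Fin n) {S : Finset (Fin n)}
    (hS : S ∈ (Finset.univ : Finset (Fin n)).powersetCard ((k:ℕ)+1)) :
    osc v k ≤ S.sup' (mem_pc_nonempty hS) v :=
  Finset.inf'_le _ (Finset.mem_attach _ ⟨S, hS⟩)

lemma le_osc (v : Fin n → ℝ) (k : Fin n) {a : ℝ}
    (h : ∀ S (hS : S ∈ (Finset.univ : Finset (Fin n)).powersetCard ((k:ℕ)+1)),
      a ≤ S.sup' (mem_pc_nonempty hS) v) : a ≤ osc v k :=
  Finset.le_inf' _ _ (fun S _ => h S.1 S.2)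

lemma Iic_mem_pc (k : Fin n) :
    (Finset.Iic k) ∈ (Finset.univ : Finset (Fin n)).powersetCard ((k:ℕ)+1) := by
  rw [Finset.mem_powersetCard]
  exact ⟨Finset.subset_univ _, Fin.card_Iic k⟩

lemma osc_monotone_eq {s : Fin n → ℝ} (hs : Monotone s) (k : Fin n) :
    osc s k = s k := by
  apply le_antisymm
  · refine le_trans (osc_le s k (Iic_mem_pc k)) ?_
    apply Finset.sup'_le
    intro i hi
    exact hs (Finset.mem_Iic.1 hi)
  · apply le_osc
    intro S hS
    rw [Finset.mem_powersetCard] at hS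
    obtain ⟨i, hi, hki⟩ : ∃ i ∈ S, k ≤ i := by
      by_contra h
      push_neg at h
      have hsub : S ⊆ Finset.Iio k := fun x hx => Finset.mem_Iio.2 (h x hx)
      have := Finset.card_le_card hsub
      rw [hS.2, Fin.card_Iio] at this
      omega
    exact le_trans (hs hki) (Finset.le_sup' s hi)

lemma osc_comp_perm_le (v : Fin n → ℝ) (σ : Equiv.Perm (Fin n)) (k : Fin n) :
    osc v k ≤ osc (v ∘ σ) k := by
  apply le_osc
  intro S hS
  rw [Finset.mem_powersetCard] at hS
  have hmem : S.image σ ∈ (Finset.univ : Finset (Fin n)).powersetCard ((k:ℕ)+1) := by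
    rw [Finset.mem_powersetCard]
    exact ⟨Finset.subset_univ _, by rw [Finset.card_image_of_injective _ σ.injective, hS.2]⟩
  refine le_trans (osc_le v k hmem) (le_of_eq ?_)
  rw [Finset.sup'_image]

lemma osc_comp_perm (v : Fin n → ℝ) (σ : Equiv.Perm (Fin n)) (k : Fin n) :
    osc (v ∘ σ) k = osc v k := by
  refine le_antisymm ?_ (osc_comp_perm_le v σ k)
  have h := osc_comp_perm_le (v ∘ σ) σ⁻¹ k
  have h2 : (v ∘ σ) ∘ ⇑σ⁻¹ = v := by funext x; simp
  rwa [h2] at h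

lemma measurable_inf'_aux {ι δ α : Type*} [MeasurableSpace δ] [MeasurableSpace α]
    [SemilatticeInf α] [MeasurableInf₂ α] {s : Finset ι} (hs : s.Nonempty) {f : ι → δ → α}
    (hf : ∀ n ∈ s, Measurable (f n)) : Measurable (s.inf' hs f) :=
  Finset.inf'_induction hs _ (fun _f hf _g hg => hf.inf hg) fun n hn => hf n hn

lemma measurable_osc (k : Fin n) : Measurable (fun v : Fin n → ℝ => osc v k) := by
  have : (fun v : Fin n → ℝ => osc v k) =
      (((Finset.univ : Finset (Fin n)).powersetCard ((k:ℕ)+1)).attach.inf'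
        (Finset.attach_nonempty_iff.2 (pcne k))
        (fun S => S.1.sup' (mem_pc_nonempty S.2) (fun i (v : Fin n → ℝ) => v i))) := by
    funext v
    rw [Finset.inf'_apply]
    unfold osc
    congr 1
    funext S
    rw [Finset.sup'_apply]
  rw [this]
  apply measurable_inf'_aux _
  intro S _
  apply Finset.measurable_sup' _
  intro i _
  exact measurable_pi_apply i

end WstarAux

namespace WstarAux
variable {n : ℕ}

noncomputable def gfun (n : ℕ) (v : Fin n → ℝ) (k : Fin n) : ℝ := ((k:ℕ)+1 : ℝ)/n - osc v k

noncomputable def argset (n : ℕ) (v : Fin n → ℝ) : Finset (Fin n) :=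
  Finset.univ.filter (fun k => ∀ i, gfun n v i ≤ gfun n v k)

lemma argset_nonempty (hn : 0 < n) (v : Fin n → ℝ) : (argset n v).Nonempty := by
  obtain ⟨k, -, hk⟩ := Finset.exists_max_image Finset.univ (gfun n v) ⟨⟨0,hn⟩, Finset.mem_univ _⟩
  refine ⟨k, ?_⟩
  simp only [argset, Finset.mem_filter, Finset.mem_univ, true_and]
  exact fun i => hk i (Finset.mem_univ i)

noncomputable def Rhat (hn : 0 < n) (v : Fin n → ℝ) : Fin n :=
  (argset n v).min' (argset_nonempty hn v)

lemma mem_argset_iff {v : Fin n → ℝ} {k : Fin n} :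
    k ∈ argset n v ↔ ∀ i, gfun n v i ≤ gfun n v k := by
  simp [argset]

lemma Rhat_eq_iff (hn : 0 < n) (v : Fin n → ℝ) (k : Fin n) :
    Rhat hn v = k ↔ (∀ i, gfun n v i ≤ gfun n v k) ∧
      ∀ j : Fin n, (∀ i, gfun n v i ≤ gfun n v j) → k ≤ j := by
  constructor
  · rintro rfl
    refine ⟨mem_argset_iff.1 (Finset.min'_mem _ _), fun j hj => Finset.min'_le _ _ (mem_argset_iff.2 hj)⟩
  · rintro ⟨h1, h2⟩
    exact le_antisymm (Finset.min'_le _ _ (mem_argset_iff.2 h1))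
      (h2 _ (mem_argset_iff.1 (Finset.min'_mem _ _)))

lemma measurable_gfun (k : Fin n) : Measurable (fun v : Fin n → ℝ => gfun n v k) :=
  measurable_const.sub (measurable_osc k)

lemma measurableSet_Rhat (hn : 0 < n) (k : Fin n) :
    MeasurableSet {v : Fin n → ℝ | Rhat hn v = k} := by
  have : {v : Fin n → ℝ | Rhat hn v = k} =
      (⋂ i, {v : Fin n → ℝ | gfun n v i ≤ gfun n v k}) ∩
        (⋂ j : Fin n, {v : Fin n → ℝ | (∀ i, gfun n v i ≤ gfun n v j) → k ≤ j}) := by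
    ext v
    simp only [Set.mem_setOf_eq, Set.mem_inter_iff, Set.mem_iInter, Rhat_eq_iff hn]
  rw [this]
  refine MeasurableSet.inter (MeasurableSet.iInter fun i =>
    measurableSet_le (measurable_gfun i) (measurable_gfun k)) (MeasurableSet.iInter fun j => ?_)
  by_cases hkj : k ≤ j
  · have : {v : Fin n → ℝ | (∀ i, gfun n v i ≤ gfun n v j) → k ≤ j} = Set.univ := by
      ext v; simp [hkj]
    rw [this]; exact MeasurableSet.univ
  · have : {v : Fin n → ℝ | (∀ i, gfun n v i ≤ gfun n v j) → k ≤ j} =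
        (⋂ i, {v : Fin n → ℝ | gfun n v i ≤ gfun n v j})ᶜ := by
      ext v; simp [hkj]
    rw [this]
    exact (MeasurableSet.iInter fun i =>
      measurableSet_le (measurable_gfun i) (measurable_gfun j)).compl

noncomputable def Wfun (hn : 0 < n) (v : Fin n → ℝ) : ℝ :=
  (((Rhat hn v : ℕ) + 1 : ℝ)/n - osc v (Rhat hn v)) /
    Real.sqrt (osc v (Rhat hn v) * (1 - osc v (Rhat hn v)))

noncomputable def Wpiece (n : ℕ) (k : Fin n) (v : Fin n → ℝ) : ℝ :=
  (((k : ℕ) + 1 : ℝ)/n - osc v k) / Real.sqrt (osc v k * (1 - osc v k))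

lemma measurable_Wpiece (k : Fin n) : Measurable (Wpiece n k) := by
  apply Measurable.div
  · exact measurable_const.sub (measurable_osc k)
  · exact Real.continuous_sqrt.measurable.comp
      ((measurable_osc k).mul (measurable_const.sub (measurable_osc k)))

lemma Wfun_eq_sum (hn : 0 < n) (v : Fin n → ℝ) :
    Wfun hn v = ∑ k : Fin n, Set.indicator {v : Fin n → ℝ | Rhat hn v = k} (Wpiece n k) v := by
  rw [Finset.sum_eq_single (Rhat hn v)]
  · rw [Set.indicator_of_mem (by simp : v ∈ {v' : Fin n → ℝ | Rhat hn v' = Rhat hn v})]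
    rfl
  · intro k _ hk
    rw [Set.indicator_of_notMem]
    simp only [Set.mem_setOf_eq]
    exact fun h => absurd h.symm hk
  · intro h; exact absurd (Finset.mem_univ _) h

lemma measurable_Wfun (hn : 0 < n) : Measurable (Wfun hn) := by
  have : Wfun hn = fun v => ∑ k : Fin n,
      Set.indicator {v : Fin n → ℝ | Rhat hn v = k} (Wpiece n k) v := by
    funext v; exact Wfun_eq_sum hn v
  rw [this]
  exact Finset.measurable_sum _ fun k _ =>
    (measurable_Wpiece k).indicator (measurableSet_Rhat hn k)

end WstarAux

namespace WstarAux

lemma F_nonneg {F : ℝ → ℝ} (hFmono : Monotone F) (hFbot : Tendsto F atBot (𝓝 0)) (x : ℝ) :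
    0 ≤ F x := by
  refine le_of_tendsto hFbot ?_
  filter_upwards [eventually_le_atBot x] with t ht
  exact hFmono ht

lemma F_le_one {F : ℝ → ℝ} (hFmono : Monotone F) (hFtop : Tendsto F atTop (𝓝 1)) (x : ℝ) :
    F x ≤ 1 := by
  refine ge_of_tendsto hFtop ?_
  filter_upwards [eventually_ge_atTop x] with t ht
  exact hFmono ht

/-- CDF of `F ∘ X` is that of a uniform random variable. -/
lemma cdf_comp {Ω : Type*} [MeasureSpace Ω] [IsProbabilityMeasure (ℙ : Measure Ω)]
    {F : ℝ → ℝ} (hFmono : Monotone F) (hFcont : Continuous F)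
    (hFbot : Tendsto F atBot (𝓝 0)) (hFtop : Tendsto F atTop (𝓝 1))
    {X : Ω → ℝ} (hXdist : ∀ t, ℙ {ω | X ω ≤ t} = ENNReal.ofReal (F t)) (u : ℝ) :
    ℙ {ω | F (X ω) ≤ u} = ENNReal.ofReal (min u 1) := by
  rcases le_or_gt 1 u with hu1 | hu1
  · have : {ω | F (X ω) ≤ u} = Set.univ := by
      ext ω
      simp only [Set.mem_setOf_eq, Set.mem_univ, iff_true]
      exact le_trans (F_le_one hFmono hFtop _) hu1
    rw [this, min_eq_right hu1, ENNReal.ofReal_one]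
    exact measure_univ
  rcases lt_or_ge u 0 with hu0 | hu0
  · have : {ω | F (X ω) ≤ u} = ∅ := by
      ext ω
      simp only [Set.mem_setOf_eq, Set.mem_empty_iff_false, iff_false, not_le]
      exact lt_of_lt_of_le hu0 (F_nonneg hFmono hFbot _)
    rw [this, min_eq_left hu1.le, ENNReal.ofReal_of_nonpos hu0.le]
    exact measure_empty
  · -- 0 ≤ u < 1
    rw [min_eq_left hu1.le]
    set A : Set ℝ := {x | F x ≤ u} with hA
    by_cases hne : A.Nonempty
    · have hbdd : BddAbove A := by
        obtain ⟨T, hT⟩ : ∃ T, u < F T := by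
          have := hFtop.eventually_const_lt hu1  -- wrong name maybe
          exact this.exists
        exact ⟨T, fun x hx => by
          by_contra hxT
          push_neg at hxT
          exact absurd (le_trans (hFmono hxT.le) hx) (not_le.2 hT)⟩
      have hclosed : IsClosed A := isClosed_le hFcont continuous_const
      set q := sSup A with hq
      have hqA : q ∈ A := hclosed.csSup_mem hne hbdd
      have hFq : F q ≤ u := hqA
      have hset : A = Set.Iic q := by
        ext x
        constructor
        · exact fun hx => le_csSup hbdd hx
        · exact fun hx => le_trans (hFmono hx) hFq
      have hFqu : F q = u := by
        refine le_antisymm hFq ?_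
        have htend : Tendsto F (𝓝[>] q) (𝓝 (F q)) :=
          (hFcont.tendsto q).mono_left nhdsWithin_le_nhds
        refine ge_of_tendsto htend ?_
        filter_upwards [self_mem_nhdsWithin] with x hx
        by_contra hc
        push_neg at hc
        have : x ∈ A := hc.le
        rw [hset] at this
        exact absurd (Set.mem_Iic.1 this) (not_le.2 hx)
      have : {ω | F (X ω) ≤ u} = {ω | X ω ≤ q} := by
        ext ω
        simp only [Set.mem_setOf_eq]
        constructor
        · intro h
          have : X ω ∈ A := h
          rwa [hset] at this
        · exact fun h => le_trans (hFmono h) hFq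
      rw [this, hXdist, hFqu]
    · -- A empty: then u ≤ 0, so u = 0 and the event is empty
      have hu0' : u ≤ 0 := by
        by_contra h
        push_neg at h
        obtain ⟨x, hx⟩ := (hFbot.eventually_lt_const h).exists
        exact hne ⟨x, hx.le⟩
      have hu : u = 0 := le_antisymm hu0' hu0
      have : {ω | F (X ω) ≤ u} = ∅ := by
        ext ω
        simp only [Set.mem_setOf_eq, Set.mem_empty_iff_false, iff_false]
        exact fun h => hne ⟨X ω, h⟩
      rw [this, hu, ENNReal.ofReal_zero]
      exact measure_empty

end WstarAux

namespace WstarAux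

lemma map_fun_eq_pi {Ω : Type*} [MeasureSpace Ω] [IsProbabilityMeasure (ℙ : Measure Ω)]
    {n : ℕ} (Z : Fin n → Ω → ℝ) (hmeas : ∀ i, Measurable (Z i))
    (hindep : iIndepFun Z ℙ) :
    Measure.map (fun ω i => Z i ω) ℙ = Measure.pi (fun i => Measure.map (Z i) ℙ) := by
  haveI : ∀ i, IsProbabilityMeasure (Measure.map (Z i) ℙ) :=
    fun i => Measure.isProbabilityMeasure_map (hmeas i).aemeasurable
  symm
  apply Measure.pi_eq
  intro s hs
  have hVmeas : Measurable (fun ω i => Z i ω) := measurable_pi_lambda _ hmeas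
  rw [Measure.map_apply hVmeas (MeasurableSet.univ_pi hs)]
  have hpre : (fun ω i => Z i ω) ⁻¹' (Set.pi Set.univ s) = ⋂ i, Z i ⁻¹' s i := by
    ext ω; simp [Set.mem_pi]
  rw [hpre]
  have h := hindep.measure_inter_preimage_eq_mul Finset.univ (sets := s)
    (fun i _ => hs i)
  simp only [Finset.mem_univ, Set.iInter_true] at h
  rw [h]
  exact Finset.prod_congr rfl fun i _ => (Measure.map_apply (hmeas i) (hs i)).symm

end WstarAux

namespace WstarAux

lemma W_eq_Wfun {Ω : Type*} {n : ℕ} (hn : 0 < n) {F : ℝ → ℝ} (hFmono : Monotone F)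
    {X : Fin n → Ω → ℝ} {ordX : Ω → ℕ → ℝ} {RX : Ω → ℕ} {WX : Ω → ℝ}
    (hordX : ∀ ω, (∀ i j, 1 ≤ i → i ≤ j → j ≤ n → ordX ω i ≤ ordX ω j) ∧
      ∃ σ : Equiv.Perm (Fin n), ∀ i : Fin n, ordX ω ((i : ℕ) + 1) = X (σ i) ω)
    (hRX : ∀ ω, RX ω ∈ Finset.Icc 1 n ∧
      (∀ i ∈ Finset.Icc 1 n,
        (i : ℝ) / n - F (ordX ω i) ≤ (RX ω : ℝ) / n - F (ordX ω (RX ω))) ∧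
      (∀ k ∈ Finset.Icc 1 n,
        (∀ i ∈ Finset.Icc 1 n,
          (i : ℝ) / n - F (ordX ω i) ≤ (k : ℝ) / n - F (ordX ω k)) → RX ω ≤ k))
    (hWX : ∀ ω, WX ω = ((RX ω : ℝ) / n - F (ordX ω (RX ω))) /
      Real.sqrt (F (ordX ω (RX ω)) * (1 - F (ordX ω (RX ω)))))
    (ω : Ω) :
    WX ω = Wfun hn (fun i => F (X i ω)) := by
  set v : Fin n → ℝ := fun i => F (X i ω) with hv
  obtain ⟨hmono, σ, hσ⟩ := hordX ω
  obtain ⟨hRmem, hRmax, hRmin⟩ := hRX ω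
  rw [Finset.mem_Icc] at hRmem
  -- sorted values
  have hsv : (fun k : Fin n => F (ordX ω ((k:ℕ)+1))) = v ∘ σ := by
    funext k
    simp only [Function.comp_apply, hv, hσ k]
  have hsmono : Monotone (fun k : Fin n => F (ordX ω ((k:ℕ)+1))) := by
    intro i j hij
    exact hFmono (hmono ((i:ℕ)+1) ((j:ℕ)+1) (Nat.le_add_left 1 _)
      (Nat.succ_le_succ hij) (Nat.succ_le_of_lt j.2))
  have hosc : ∀ k : Fin n, osc v k = F (ordX ω ((k:ℕ)+1)) := by
    intro k
    rw [← osc_comp_perm v σ k, ← hsv]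
    exact osc_monotone_eq hsmono k
  -- translation between gfun and the ℕ-indexed maximized quantity
  have hgf : ∀ (m : ℕ) (hm1 : 1 ≤ m) (hmn : m ≤ n),
      gfun n v ⟨m - 1, by omega⟩ = (m : ℝ)/n - F (ordX ω m) := by
    intro m hm1 hmn
    have h1 : (m - 1) + 1 = m := by omega
    unfold gfun
    rw [hosc]
    simp only [h1]
    congr 2
    push_cast [Nat.cast_sub hm1]
    ring
  have hfinidx : ∀ k : Fin n, (⟨((k:ℕ)+1) - 1, by omega⟩ : Fin n) = k := by
    intro k; apply Fin.ext; simp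
  set k0 : Fin n := ⟨RX ω - 1, by omega⟩ with hk0
  have hR : Rhat hn v = k0 := by
    rw [Rhat_eq_iff]
    constructor
    · intro i
      have h1 := hgf ((i:ℕ)+1) (Nat.le_add_left 1 _) (Nat.succ_le_of_lt i.2)
      rw [hfinidx i] at h1
      rw [h1, hgf (RX ω) hRmem.1 hRmem.2]
      exact hRmax ((i:ℕ)+1) (Finset.mem_Icc.2 ⟨Nat.le_add_left 1 _, Nat.succ_le_of_lt i.2⟩)
    · intro j hj
      have hle : RX ω ≤ (j:ℕ) + 1 := by
        apply hRmin ((j:ℕ)+1)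
          (Finset.mem_Icc.2 ⟨Nat.le_add_left 1 _, Nat.succ_le_of_lt j.2⟩)
        intro i hi
        rw [Finset.mem_Icc] at hi
        have h1 := hgf i hi.1 hi.2
        have h2 := hgf ((j:ℕ)+1) (Nat.le_add_left 1 _) (Nat.succ_le_of_lt j.2)
        rw [hfinidx j] at h2
        rw [← h1, ← h2]
        exact hj _
      rw [Fin.le_def]
      simp only [hk0]
      omega
  have hosck0 : osc v k0 = F (ordX ω (RX ω)) := by
    rw [hosc k0]
    congr 2
    simp only [hk0]
    omega
  have hcast : ((k0 : ℕ) : ℝ) + 1 = (RX ω : ℝ) := by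
    simp only [hk0]
    push_cast [Nat.cast_sub hRmem.1]
    ring
  rw [hWX ω]
  unfold Wfun
  rw [hR, hosck0, hcast]

end WstarAux


open WstarAux in
theorem Wstar_distribution_free
    {Ω Ω' : Type*} [MeasureSpace Ω] [MeasureSpace Ω']
    [IsProbabilityMeasure (ℙ : Measure Ω)] [IsProbabilityMeasure (ℙ : Measure Ω')]
    (n : ℕ) (hn : 0 < n)
    -- two continuous distribution functions
    (F G : ℝ → ℝ)
    (hFmono : Monotone F) (hFcont : Continuous F)
    (hFbot : Tendsto F atBot (𝓝 0)) (hFtop : Tendsto F atTop (𝓝 1))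
    (hGmono : Monotone G) (hGcont : Continuous G)
    (hGbot : Tendsto G atBot (𝓝 0)) (hGtop : Tendsto G atTop (𝓝 1))
    -- `X` i.i.d. with distribution function `F`, `Y` i.i.d. with distribution function `G`
    (X : Fin n → Ω → ℝ) (hXmeas : ∀ i, Measurable (X i))
    (hXindep : iIndepFun X ℙ)
    (hXdist : ∀ i t, ℙ {ω | X i ω ≤ t} = ENNReal.ofReal (F t))
    (Y : Fin n → Ω' → ℝ) (hYmeas : ∀ i, Measurable (Y i))
    (hYindep : iIndepFun Y ℙ)
    (hYdist : ∀ i t, ℙ {ω' | Y i ω' ≤ t} = ENNReal.ofReal (G t))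
    -- order statistics
    (ordX : Ω → ℕ → ℝ)
    (hordX : ∀ ω, (∀ i j, 1 ≤ i → i ≤ j → j ≤ n → ordX ω i ≤ ordX ω j) ∧
      ∃ σ : Equiv.Perm (Fin n), ∀ i : Fin n, ordX ω ((i : ℕ) + 1) = X (σ i) ω)
    (ordY : Ω' → ℕ → ℝ)
    (hordY : ∀ ω', (∀ i j, 1 ≤ i → i ≤ j → j ≤ n → ordY ω' i ≤ ordY ω' j) ∧
      ∃ σ : Equiv.Perm (Fin n), ∀ i : Fin n, ordY ω' ((i : ℕ) + 1) = Y (σ i) ω')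
    -- least maximizers
    (RX : Ω → ℕ)
    (hRX : ∀ ω, RX ω ∈ Finset.Icc 1 n ∧
      (∀ i ∈ Finset.Icc 1 n,
        (i : ℝ) / n - F (ordX ω i) ≤ (RX ω : ℝ) / n - F (ordX ω (RX ω))) ∧
      (∀ k ∈ Finset.Icc 1 n,
        (∀ i ∈ Finset.Icc 1 n,
          (i : ℝ) / n - F (ordX ω i) ≤ (k : ℝ) / n - F (ordX ω k)) → RX ω ≤ k))
    (RY : Ω' → ℕ)
    (hRY : ∀ ω', RY ω' ∈ Finset.Icc 1 n ∧
      (∀ i ∈ Finset.Icc 1 n,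
        (i : ℝ) / n - G (ordY ω' i) ≤ (RY ω' : ℝ) / n - G (ordY ω' (RY ω'))) ∧
      (∀ k ∈ Finset.Icc 1 n,
        (∀ i ∈ Finset.Icc 1 n,
          (i : ℝ) / n - G (ordY ω' i) ≤ (k : ℝ) / n - G (ordY ω' k)) → RY ω' ≤ k))
    -- the statistics
    (WX : Ω → ℝ)
    (hWX : ∀ ω, WX ω = ((RX ω : ℝ) / n - F (ordX ω (RX ω))) /
      Real.sqrt (F (ordX ω (RX ω)) * (1 - F (ordX ω (RX ω)))))
    (WY : Ω' → ℝ)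
    (hWY : ∀ ω', WY ω' = ((RY ω' : ℝ) / n - G (ordY ω' (RY ω'))) /
      Real.sqrt (G (ordY ω' (RY ω')) * (1 - G (ordY ω' (RY ω'))))) :
    ∀ t : ℝ, ℙ {ω | WX ω ≤ t} = ℙ {ω' | WY ω' ≤ t} := by
  intro t
  have hFXmeas : ∀ i, Measurable fun ω => F (X i ω) :=
    fun i => hFcont.measurable.comp (hXmeas i)
  have hGYmeas : ∀ i, Measurable fun ω' => G (Y i ω') :=
    fun i => hGcont.measurable.comp (hYmeas i)
  have hWset : MeasurableSet (Wfun hn ⁻¹' Set.Iic t) :=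
    (measurable_Wfun hn) measurableSet_Iic
  have hX' : {ω | WX ω ≤ t} = (fun ω i => F (X i ω)) ⁻¹' (Wfun hn ⁻¹' Set.Iic t) := by
    ext ω
    simp only [Set.mem_preimage, Set.mem_Iic, Set.mem_setOf_eq]
    rw [W_eq_Wfun hn hFmono hordX hRX hWX ω]
  have hY' : {ω' | WY ω' ≤ t} = (fun ω' i => G (Y i ω')) ⁻¹' (Wfun hn ⁻¹' Set.Iic t) := by
    ext ω'
    simp only [Set.mem_preimage, Set.mem_Iic, Set.mem_setOf_eq]
    rw [W_eq_Wfun hn hGmono hordY hRY hWY ω']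
  rw [hX', hY',
    ← Measure.map_apply (measurable_pi_lambda _ hFXmeas) hWset,
    ← Measure.map_apply (measurable_pi_lambda _ hGYmeas) hWset]
  congr 1
  rw [map_fun_eq_pi _ hFXmeas (hXindep.comp (fun _ => F) fun _ => hFcont.measurable),
      map_fun_eq_pi _ hGYmeas (hYindep.comp (fun _ => G) fun _ => hGcont.measurable)]
  congr 1
  funext i
  haveI : IsProbabilityMeasure (Measure.map (fun ω => F (X i ω)) ℙ) :=
    Measure.isProbabilityMeasure_map (hFXmeas i).aemeasurable
  refine MeasureTheory.Measure.ext_of_Iic _ _ (fun u => ?_)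
  rw [Measure.map_apply (hFXmeas i) measurableSet_Iic,
      Measure.map_apply (hGYmeas i) measurableSet_Iic]
  have hXu : (fun ω => F (X i ω)) ⁻¹' Set.Iic u = {ω | F (X i ω) ≤ u} := rfl
  have hYu : (fun ω' => G (Y i ω')) ⁻¹' Set.Iic u = {ω' | G (Y i ω') ≤ u} := rfl
  rw [hXu, hYu,
    cdf_comp hFmono hFcont hFbot hFtop (hXdist i) u,
    cdf_comp hGmono hGcont hGbot hGtop (hYdist i) u]
end

section
/- Let f : [0,1] → ℝ be continuous with a unique maximizing point τ ∈ (0,1), let 0 < ε ≤ min(τ, 1−τ), set m_ε := sup{f(t) : t ∈ [0, τ−ε] ∪ [τ+ε, 1]} and δ_ε := (f(τ) − m_ε)/3. Then δ_ε > 0, and for every càdlàg g : [0,1] → ℝ with sup_{t∈[0,1]} |g(t) − f(t)| ≤ δ_ε one has max(g(t), g(t−)) < g(τ) for all t ∈ [0,1] \ (τ−ε, τ+ε]; consequently a(g) ∈ (τ−ε, τ+ε]. -/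
open Filter Topology

/-- A function `g : ℝ → ℝ` is càdlàg on `[0,1]`: right-continuous on `[0,1)`
and with a left limit at every point of `(0,1]`. -/
def Cadlag (g : ℝ → ℝ) : Prop :=
  (∀ t ∈ Set.Ico (0 : ℝ) 1, Tendsto g (𝓝[>] t) (𝓝 (g t))) ∧
  (∀ t ∈ Set.Ioc (0 : ℝ) 1, ∃ L : ℝ, Tendsto g (𝓝[<] t) (𝓝 L))

/-- The left limit `g(t−)`, with the convention `g(0−) := g(0)`. -/
noncomputable def leftVal (g : ℝ → ℝ) (t : ℝ) : ℝ :=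
  if t = 0 then g 0 else Function.leftLim g t

/-- `M(g) = sup_{t ∈ [0,1]} g(t)`. -/
noncomputable def Mval (g : ℝ → ℝ) : ℝ := sSup (g '' Set.Icc 0 1)

/-- The set `A(g) = {t ∈ [0,1] : max(g(t), g(t−)) = M(g)}`. -/
def Aset (g : ℝ → ℝ) : Set ℝ :=
  {t ∈ Set.Icc (0 : ℝ) 1 | max (g t) (leftVal g t) = Mval g}

/-- The argmax functional `a(g) = min A(g)`. -/
noncomputable def argmaxF (g : ℝ → ℝ) : ℝ := sInf (Aset g)

/-- If `g` eventually satisfies `g s ≤ c` to the left of `t` and has a left limit there,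
then `leftVal g t ≤ c`. -/
lemma leftVal_le_of_eventually (g : ℝ → ℝ) {t c : ℝ} (ht : 0 < t)
    (hL : ∃ L, Tendsto g (𝓝[<] t) (𝓝 L))
    (h : ∀ᶠ s in 𝓝[<] t, g s ≤ c) : leftVal g t ≤ c := by
  obtain ⟨L, hLt⟩ := hL
  have hne : (𝓝[<] t) ≠ ⊥ := (inferInstance : (𝓝[<] t).NeBot).ne
  rw [leftVal, if_neg ht.ne', leftLim_eq_of_tendsto hLt]
  exact le_of_tendsto hLt h

lemma max_le_Mval (g : ℝ → ℝ) (hg : Cadlag g) (hbdd : BddAbove (g '' Set.Icc 0 1))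
    {t : ℝ} (ht : t ∈ Set.Icc (0 : ℝ) 1) : max (g t) (leftVal g t) ≤ Mval g := by
  have hgle : ∀ s ∈ Set.Icc (0 : ℝ) 1, g s ≤ Mval g := fun s hs => le_csSup hbdd ⟨s, hs, rfl⟩
  refine max_le (hgle t ht) ?_
  rcases eq_or_lt_of_le ht.1 with h0 | h0
  · rw [leftVal, if_pos h0.symm]
    exact hgle 0 ⟨le_refl 0, zero_le_one⟩
  · refine leftVal_le_of_eventually g h0 (hg.2 t ⟨h0, ht.2⟩) ?_
    filter_upwards [Ioo_mem_nhdsLT_of_mem ⟨h0, le_refl t⟩] with s hs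
    exact hgle s ⟨hs.1.le, hs.2.le.trans ht.2⟩

/-- Along a sequence `v n ↓ a` with `v n > a`, both `g (v n)` and the left limits at `v n`
converge to `g a` (by right continuity at `a`). -/
lemma tendsto_max_leftVal (g : ℝ → ℝ) (hg : Cadlag g) {a : ℝ} (ha : a ∈ Set.Ico (0 : ℝ) 1)
    {v : ℕ → ℝ} (hv1 : ∀ n, a < v n) (hv2 : ∀ n, v n ≤ 1)
    (hv : Tendsto v atTop (𝓝 a)) :
    Tendsto (fun n => max (g (v n)) (leftVal g (v n))) atTop (𝓝 (g a)) := by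
  have hrc : ContinuousWithinAt g (Set.Ici a) a :=
    continuousWithinAt_Ioi_iff_Ici.mp (hg.1 a ha)
  have hvt : Tendsto v atTop (𝓝[Set.Ici a] a) :=
    tendsto_nhdsWithin_iff.mpr ⟨hv, Eventually.of_forall fun n => (hv1 n).le⟩
  have hgv : Tendsto (fun n => g (v n)) atTop (𝓝 (g a)) := hrc.tendsto.comp hvt
  -- choose points `w n ∈ (a, v n)` approximating the left limits at `v n`
  have hchoice : ∀ n : ℕ, ∃ w, a < w ∧ w < v n ∧
      |leftVal g (v n) - g w| < 1 / (n + 1) := by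
    intro n
    have hvn : v n ∈ Set.Ioc (0 : ℝ) 1 := ⟨lt_of_le_of_lt ha.1 (hv1 n), hv2 n⟩
    obtain ⟨L, hL⟩ := hg.2 (v n) hvn
    have hne : (𝓝[<] v n) ≠ ⊥ := (inferInstance : (𝓝[<] v n).NeBot).ne
    have hval : leftVal g (v n) = L := by
      rw [leftVal, if_neg hvn.1.ne', leftLim_eq_of_tendsto hL]
    have hpos : (0 : ℝ) < 1 / (n + 1) := by positivity
    have hev : ∀ᶠ s in 𝓝[<] v n, dist (g s) L < 1 / (n + 1) :=
      (Metric.tendsto_nhds.mp hL) _ hpos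
    have hmem : Set.Ioo a (v n) ∈ 𝓝[<] v n :=
      Ioo_mem_nhdsLT_of_mem ⟨hv1 n, le_refl _⟩
    obtain ⟨ws, hw1, hw2⟩ := (hev.and (Filter.eventually_mem_set.mpr hmem)).exists
    refine ⟨ws, hw2.1, hw2.2, ?_⟩
    rw [hval]
    rw [Real.dist_eq, abs_sub_comm] at hw1
    exact hw1
  choose w hw1 hw2 hw3 using hchoice
  have hwa : Tendsto w atTop (𝓝 a) :=
    tendsto_of_tendsto_of_tendsto_of_le_of_le tendsto_const_nhds hv
      (fun n => (hw1 n).le) (fun n => (hw2 n).le)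
  have hwt : Tendsto w atTop (𝓝[Set.Ici a] a) :=
    tendsto_nhdsWithin_iff.mpr ⟨hwa, Eventually.of_forall fun n => (hw1 n).le⟩
  have hgw : Tendsto (fun n => g (w n)) atTop (𝓝 (g a)) := hrc.tendsto.comp hwt
  have hdiff : Tendsto (fun n => leftVal g (v n) - g (w n)) atTop (𝓝 0) := by
    apply squeeze_zero_norm (fun n => (hw3 n).le) tendsto_one_div_add_atTop_nhds_zero_nat
  have hlv : Tendsto (fun n => leftVal g (v n)) atTop (𝓝 (g a)) := by
    have := hdiff.add hgw
    simpa using this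
  have := hgv.max hlv
  simpa [max_self] using this

lemma aset_nonempty (g : ℝ → ℝ) (hg : Cadlag g) (hbdd : BddAbove (g '' Set.Icc 0 1)) :
    (Aset g).Nonempty := by
  have himne : (g '' Set.Icc 0 1).Nonempty := ⟨g 0, 0, ⟨le_refl 0, zero_le_one⟩, rfl⟩
  have hgle : ∀ s ∈ Set.Icc (0 : ℝ) 1, g s ≤ Mval g := fun s hs => le_csSup hbdd ⟨s, hs, rfl⟩
  have hseq : ∀ n : ℕ, ∃ t, t ∈ Set.Icc (0 : ℝ) 1 ∧ Mval g - 1 / (n + 1) < g t := by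
    intro n
    have hlt : Mval g - 1 / (n + 1) < Mval g := by
      have : (0 : ℝ) < 1 / (n + 1) := by positivity
      linarith
    obtain ⟨y, hy, hylt⟩ := exists_lt_of_lt_csSup himne hlt
    obtain ⟨t, ht, rfl⟩ := hy
    exact ⟨t, ht, hylt⟩
  choose u hu hgu using hseq
  obtain ⟨t, htIcc, φ, hφ, htend⟩ := isCompact_Icc.tendsto_subseq hu
  have h1n : Tendsto (fun n : ℕ => Mval g - 1 / (φ n + 1)) atTop (𝓝 (Mval g)) := by
    have h0 : Tendsto (fun n : ℕ => 1 / ((φ n : ℝ) + 1)) atTop (𝓝 0) :=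
      tendsto_one_div_add_atTop_nhds_zero_nat.comp hφ.tendsto_atTop
    have := tendsto_const_nhds (x := Mval g) (f := atTop (α := ℕ)) |>.sub h0
    simpa using this
  have hgM : Tendsto (fun n => g (u (φ n))) atTop (𝓝 (Mval g)) :=
    tendsto_of_tendsto_of_tendsto_of_le_of_le h1n tendsto_const_nhds
      (fun n => (hgu (φ n)).le) (fun n => hgle _ (hu (φ n)))
  by_cases hfr : ∃ᶠ n in atTop, u (φ n) < t
  · -- approach from the left: the left limit at `t` equals `Mval g`
    obtain ⟨ψ, hψ, hlt⟩ := Filter.extraction_of_frequently_atTop hfr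
    have ht0 : 0 < t := lt_of_le_of_lt (hu (φ (ψ 0))).1 (hlt 0)
    obtain ⟨L, hL⟩ := hg.2 t ⟨ht0, htIcc.2⟩
    have hvt : Tendsto (fun n => u (φ (ψ n))) atTop (𝓝[<] t) :=
      tendsto_nhdsWithin_iff.mpr ⟨htend.comp hψ.tendsto_atTop, Eventually.of_forall hlt⟩
    have h1 : Tendsto (fun n => g (u (φ (ψ n)))) atTop (𝓝 L) := hL.comp hvt
    have h2 : Tendsto (fun n => g (u (φ (ψ n)))) atTop (𝓝 (Mval g)) :=
      hgM.comp hψ.tendsto_atTop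
    have hLM : L = Mval g := tendsto_nhds_unique h1 h2
    have hne : (𝓝[<] t) ≠ ⊥ := (inferInstance : (𝓝[<] t).NeBot).ne
    have hlv : leftVal g t = Mval g := by
      rw [leftVal, if_neg ht0.ne', leftLim_eq_of_tendsto hL, hLM]
    refine ⟨t, htIcc, le_antisymm (max_le_Mval g hg hbdd htIcc) ?_⟩
    rw [← hlv]
    exact le_max_right _ _
  · -- approach from the right (or at `t`): `g t = Mval g`
    have hev : ∀ᶠ n in atTop, t ≤ u (φ n) := by
      have := Filter.not_frequently.mp hfr
      simpa [not_lt] using this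
    have hgt : g t = Mval g := by
      rcases eq_or_lt_of_le htIcc.2 with ht1 | ht1
      · -- t = 1, so eventually u (φ n) = t
        have heq : ∀ᶠ n in atTop, g (u (φ n)) = g t := by
          filter_upwards [hev] with n hn
          have : u (φ n) = t := le_antisymm (ht1 ▸ (hu (φ n)).2) hn
          rw [this]
        have hc : Tendsto (fun n => g (u (φ n))) atTop (𝓝 (g t)) :=
          Tendsto.congr' (heq.mono fun n h => h.symm) tendsto_const_nhds
        exact tendsto_nhds_unique hc hgM
      · have hrc : ContinuousWithinAt g (Set.Ici t) t :=
          continuousWithinAt_Ioi_iff_Ici.mp (hg.1 t ⟨htIcc.1, ht1⟩)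
        have hvt : Tendsto (fun n => u (φ n)) atTop (𝓝[Set.Ici t] t) :=
          tendsto_nhdsWithin_iff.mpr ⟨htend, hev⟩
        have hc : Tendsto (fun n => g (u (φ n))) atTop (𝓝 (g t)) := hrc.tendsto.comp hvt
        exact tendsto_nhds_unique hc hgM
    refine ⟨t, htIcc, le_antisymm (max_le_Mval g hg hbdd htIcc) ?_⟩
    rw [← hgt]
    exact le_max_left _ _

lemma sInf_mem_Aset (g : ℝ → ℝ) (hg : Cadlag g) (hbdd : BddAbove (g '' Set.Icc 0 1))
    (hne : (Aset g).Nonempty) : sInf (Aset g) ∈ Aset g := by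
  have hbelow : BddBelow (Aset g) := ⟨0, fun x hx => hx.1.1⟩
  obtain ⟨u, hanti, hu, humem⟩ := exists_seq_tendsto_sInf hne hbelow
  set a := sInf (Aset g) with ha
  have ha0 : 0 ≤ a := le_csInf hne fun x hx => hx.1.1
  have haleu : ∀ n, a ≤ u n := fun n => csInf_le hbelow (humem n)
  have ha1 : a ≤ 1 := (haleu 0).trans (humem 0).1.2
  have haIcc : a ∈ Set.Icc (0 : ℝ) 1 := ⟨ha0, ha1⟩
  by_cases hexa : ∃ n, u n = a
  · obtain ⟨n, hn⟩ := hexa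
    exact hn ▸ humem n
  · push_neg at hexa
    have hlt : ∀ n, a < u n := fun n => lt_of_le_of_ne (haleu n) (hexa n).symm
    have ha1' : a < 1 := lt_of_lt_of_le (hlt 0) (humem 0).1.2
    have htend := tendsto_max_leftVal g hg ⟨ha0, ha1'⟩ hlt (fun n => (humem n).1.2) hu
    have hconst : Tendsto (fun n => max (g (u n)) (leftVal g (u n))) atTop (𝓝 (Mval g)) :=
      Tendsto.congr' (Eventually.of_forall fun n => ((humem n).2).symm) tendsto_const_nhds
    have hgaM : g a = Mval g := tendsto_nhds_unique htend hconst
    refine ⟨haIcc, le_antisymm (max_le_Mval g hg hbdd haIcc) ?_⟩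
    rw [← hgaM]
    exact le_max_left _ _

theorem basic_inequality_near_unique_max
    (f : ℝ → ℝ) (hf : ContinuousOn f (Set.Icc 0 1))
    (τ : ℝ) (hτ : τ ∈ Set.Ioo (0 : ℝ) 1)
    (huniq : ∀ t ∈ Set.Icc (0 : ℝ) 1, t ≠ τ → f t < f τ)
    (ε : ℝ) (hε : 0 < ε) (hετ : ε ≤ min τ (1 - τ))
    (m δ : ℝ)
    (hm : m = sSup (f '' (Set.Icc 0 (τ - ε) ∪ Set.Icc (τ + ε) 1)))
    (hδ : δ = (f τ - m) / 3) :
    0 < δ ∧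
      ∀ g : ℝ → ℝ, Cadlag g → (∀ t ∈ Set.Icc (0 : ℝ) 1, |g t - f t| ≤ δ) →
        (∀ t ∈ Set.Icc (0 : ℝ) 1, t ∉ Set.Ioc (τ - ε) (τ + ε) →
            max (g t) (leftVal g t) < g τ) ∧
          argmaxF g ∈ Set.Ioc (τ - ε) (τ + ε) := by
  have hε1 : ε ≤ τ := hετ.trans (min_le_left _ _)
  have hε2 : ε ≤ 1 - τ := hετ.trans (min_le_right _ _)
  set K := Set.Icc (0 : ℝ) (τ - ε) ∪ Set.Icc (τ + ε) 1 with hK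
  have hKsub : K ⊆ Set.Icc 0 1 := by
    rintro x (hx | hx) <;> exact ⟨by linarith [hx.1, hx.2, hτ.1.le], by linarith [hx.1, hx.2]⟩
  have hKne : (0 : ℝ) ∈ K := Or.inl ⟨le_refl 0, by linarith⟩
  have hKc : IsCompact K := isCompact_Icc.union isCompact_Icc
  obtain ⟨t0, ht0K, ht0max⟩ := hKc.exists_isMaxOn ⟨0, hKne⟩ (hf.mono hKsub)
  have ht0max' : ∀ x ∈ K, f x ≤ f t0 := fun x hx => isMaxOn_iff.mp ht0max x hx
  have hmax : IsGreatest (f '' K) (f t0) :=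
    ⟨⟨t0, ht0K, rfl⟩, by rintro y ⟨x, hx, rfl⟩; exact ht0max' x hx⟩
  have hm' : m = f t0 := by rw [hm]; exact hmax.csSup_eq
  have ht0ne : t0 ≠ τ := by
    rintro rfl
    rcases ht0K with h | h
    · linarith [h.2]
    · linarith [h.1]
  have hmlt : m < f τ := hm' ▸ huniq t0 (hKsub ht0K) ht0ne
  have hδpos : 0 < δ := by rw [hδ]; linarith
  refine ⟨hδpos, ?_⟩
  intro g hg hgf
  have hfleK : ∀ s ∈ K, f s ≤ m := fun s hs => hm' ▸ ht0max' s hs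
  have hgleK : ∀ s ∈ K, g s ≤ m + δ := by
    intro s hs
    have h1 := (abs_le.mp (hgf s (hKsub hs))).2
    linarith [hfleK s hs]
  have hτIcc : τ ∈ Set.Icc (0 : ℝ) 1 := ⟨hτ.1.le, hτ.2.le⟩
  have hfτ : f τ = m + 3 * δ := by rw [hδ]; ring
  have hgτ : m + 2 * δ ≤ g τ := by
    have h1 := (abs_le.mp (hgf τ hτIcc)).1
    linarith
  have main : ∀ t ∈ Set.Icc (0 : ℝ) 1, t ∉ Set.Ioc (τ - ε) (τ + ε) →
      max (g t) (leftVal g t) < g τ := by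
    intro t ht htno
    have htK : (t ≤ τ - ε ∧ t ∈ K) ∨ (τ + ε < t ∧ t ∈ K) := by
      rcases le_or_gt t (τ - ε) with h | h
      · exact Or.inl ⟨h, Or.inl ⟨ht.1, h⟩⟩
      · have h2 : τ + ε < t := by
          by_contra hc
          push_neg at hc
          exact htno ⟨h, hc⟩
        exact Or.inr ⟨h2, Or.inr ⟨h2.le, ht.2⟩⟩
    have hgt : g t ≤ m + δ := hgleK t (htK.elim (·.2) (·.2))
    have hlv : leftVal g t ≤ m + δ := by
      rcases eq_or_lt_of_le ht.1 with h0 | h0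
      · rw [leftVal, if_pos h0.symm]
        exact h0 ▸ hgt
      · refine leftVal_le_of_eventually g h0 (hg.2 t ⟨h0, ht.2⟩) ?_
        rcases htK with ⟨hle, _⟩ | ⟨hgt2, _⟩
        · filter_upwards [Ioo_mem_nhdsLT_of_mem ⟨h0, le_refl t⟩] with s hs
          exact hgleK s (Or.inl ⟨hs.1.le, hs.2.le.trans hle⟩)
        · filter_upwards [Ioo_mem_nhdsLT_of_mem ⟨hgt2, le_refl t⟩] with s hs
          exact hgleK s (Or.inr ⟨hs.1.le, hs.2.le.trans ht.2⟩)
    calc max (g t) (leftVal g t) ≤ m + δ := max_le hgt hlv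
      _ < m + 2 * δ := by linarith
      _ ≤ g τ := hgτ
  refine ⟨main, ?_⟩
  have hbdd : BddAbove (g '' Set.Icc 0 1) := by
    refine ⟨f τ + δ, ?_⟩
    rintro y ⟨s, hs, rfl⟩
    have h1 := (abs_le.mp (hgf s hs)).2
    have h2 : f s ≤ f τ := by
      rcases eq_or_ne s τ with rfl | hne
      · exact le_refl _
      · exact (huniq s hs hne).le
    linarith
  have hMge : g τ ≤ Mval g := le_csSup hbdd ⟨τ, hτIcc, rfl⟩
  have hAsub : Aset g ⊆ Set.Ioc (τ - ε) (τ + ε) := by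
    intro t ht
    by_contra hc
    have hlt := main t ht.1 hc
    rw [ht.2] at hlt
    exact absurd hMge (not_le.mpr hlt)
  exact hAsub (sInf_mem_Aset g hg hbdd (aset_nonempty g hg hbdd))
end

section
/- Let f : [0,1] → ℝ be continuous with a unique maximizing point τ ∈ [0,1], and let (f_n) be a sequence of càdlàg functions on [0,1] with sup_{t∈[0,1]} |f_n(t) − f(t)| → 0 as n → ∞. Then a(f_n) → τ = a(f); i.e., the argmax-functional a is continuous (with respect to uniform convergence) at every continuous function with a unique maximizing point. -/
open Filter Topology

lemma left_tendsto_of_continuousOn {f : ℝ → ℝ} (hf : ContinuousOn f (Set.Icc 0 1))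
    {t : ℝ} (ht : t ∈ Set.Ioc (0:ℝ) 1) :
    Tendsto f (𝓝[<] t) (𝓝 (f t)) := by
  have h1 : Tendsto f (𝓝[Set.Icc 0 1] t) (𝓝 (f t)) := hf t ⟨ht.1.le, ht.2⟩
  apply h1.mono_left
  rw [← nhdsWithin_Ioo_eq_nhdsLT ht.1]
  exact nhdsWithin_mono _ (fun s hs => ⟨hs.1.le, hs.2.le.trans ht.2⟩)

lemma leftVal_le_of_tendsto {g h : ℝ → ℝ} (hg : Cadlag g) {t c : ℝ}
    (ht : t ∈ Set.Ioc (0:ℝ) 1) (hh : Tendsto h (𝓝[<] t) (𝓝 c))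
    (hb : ∀ s ∈ Set.Ioo (0:ℝ) t, g s ≤ h s) : leftVal g t ≤ c := by
  obtain ⟨L, hL⟩ := hg.2 t ht
  have hne : (𝓝[<] t) ≠ ⊥ := (nhdsLT_neBot t).ne'
  rw [leftVal, if_neg (ne_of_gt ht.1), leftLim_eq_of_tendsto hL]
  refine le_of_tendsto_of_tendsto hL hh ?_
  filter_upwards [Ioo_mem_nhdsLT ht.1] with s hs
  exact hb s hs

lemma leftVal_eq_of_continuousOn {f : ℝ → ℝ} (hf : ContinuousOn f (Set.Icc 0 1))
    {t : ℝ} (ht : t ∈ Set.Icc (0:ℝ) 1) : leftVal f t = f t := by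
  rcases eq_or_ne t 0 with h | h
  · rw [h, leftVal, if_pos rfl]
  · have ht' : t ∈ Set.Ioc (0:ℝ) 1 := ⟨ht.1.lt_of_ne (Ne.symm h), ht.2⟩
    rw [leftVal, if_neg h]
    exact leftLim_eq_of_tendsto
      (left_tendsto_of_continuousOn hf ht')

/-- A càdlàg function bounded above on `[0,1]` attains its supremum in the
sense of `Aset`. -/
lemma Aset_nonempty {g : ℝ → ℝ} (hg : Cadlag g) (hb : BddAbove (g '' Set.Icc 0 1)) :
    (Aset g).Nonempty := by
  set M := Mval g with hMdef
  have hne : (g '' Set.Icc 0 1).Nonempty := ⟨g 0, 0, by norm_num, rfl⟩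
  have hle : ∀ s ∈ Set.Icc (0:ℝ) 1, g s ≤ M := fun s hs => le_csSup hb ⟨s, hs, rfl⟩
  have hlv_le : ∀ t ∈ Set.Icc (0:ℝ) 1, leftVal g t ≤ M := by
    intro t ht
    rcases eq_or_ne t 0 with h | h
    · rw [h, leftVal, if_pos rfl]; exact hle 0 (by norm_num)
    · have ht' : t ∈ Set.Ioc (0:ℝ) 1 := ⟨ht.1.lt_of_ne (Ne.symm h), ht.2⟩
      exact leftVal_le_of_tendsto hg ht' tendsto_const_nhds
        (fun s hs => hle s ⟨hs.1.le, hs.2.le.trans ht.2⟩)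
  have hsel : ∀ n : ℕ, ∃ s ∈ Set.Icc (0:ℝ) 1, M - 1/(n+1) < g s := by
    intro n
    have hpos : (0:ℝ) < 1/(n+1) := by positivity
    obtain ⟨y, ⟨s, hs, rfl⟩, hy2⟩ := exists_lt_of_lt_csSup hne (by linarith : M - 1/(n+1) < M)
    exact ⟨s, hs, hy2⟩
  choose u hu hgu using hsel
  obtain ⟨t, htIcc, φ, hφ, hut⟩ := isCompact_Icc.tendsto_subseq hu
  have hlow : Tendsto (fun k : ℕ => M - 1/(φ k + 1)) atTop (𝓝 M) := by
    have h0 : Tendsto (fun k : ℕ => 1/((φ k : ℝ)+1)) atTop (𝓝 0) :=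
      tendsto_one_div_add_atTop_nhds_zero_nat.comp hφ.tendsto_atTop
    simpa using (tendsto_const_nhds : Tendsto (fun _ : ℕ => M) atTop (𝓝 M)).sub h0
  have hgM : Tendsto (fun k => g (u (φ k))) atTop (𝓝 M) := by
    refine tendsto_of_tendsto_of_tendsto_of_le_of_le hlow tendsto_const_nhds
      (fun k => (hgu (φ k)).le) (fun k => hle _ (hu (φ k)))
  by_cases hfreq : ∃ᶠ k in atTop, u (φ k) < t
  · obtain ⟨ψ, hψ, hlt⟩ := Filter.extraction_of_frequently_atTop hfreq
    have ht0 : 0 < t := lt_of_le_of_lt (hu (φ (ψ 0))).1 (hlt 0)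
    obtain ⟨L, hL⟩ := hg.2 t ⟨ht0, htIcc.2⟩
    have htend : Tendsto (fun k => u (φ (ψ k))) atTop (𝓝[<] t) := by
      rw [tendsto_nhdsWithin_iff]
      exact ⟨hut.comp hψ.tendsto_atTop, Eventually.of_forall hlt⟩
    have h1 : Tendsto (fun k => g (u (φ (ψ k)))) atTop (𝓝 L) := hL.comp htend
    have h2 : Tendsto (fun k => g (u (φ (ψ k)))) atTop (𝓝 M) := hgM.comp hψ.tendsto_atTop
    have hLM : L = M := tendsto_nhds_unique h1 h2
    refine ⟨t, htIcc, ?_⟩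
    have hlv : leftVal g t = L := by
      rw [leftVal, if_neg ht0.ne']
      exact leftLim_eq_of_tendsto hL
    rw [hlv, hLM, max_eq_right (hle t htIcc)]
  · have hev : ∀ᶠ k in atTop, t ≤ u (φ k) := by
      rw [Filter.not_frequently] at hfreq
      filter_upwards [hfreq] with k hk
      exact not_lt.mp hk
    have hgt : g t = M := by
      rcases eq_or_lt_of_le htIcc.2 with h1 | h1
      · -- t = 1
        have heq : ∀ᶠ k in atTop, u (φ k) = t := by
          filter_upwards [hev] with k hk
          exact le_antisymm (h1 ▸ (hu (φ k)).2) hk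
        have h2 : Tendsto (fun _ : ℕ => g t) atTop (𝓝 M) :=
          hgM.congr' (by filter_upwards [heq] with k hk; rw [hk])
        exact (tendsto_nhds_unique h2 tendsto_const_nhds).symm
      · have hrc := hg.1 t ⟨htIcc.1, h1⟩
        have hIci : Tendsto g (𝓝[Set.Ici t] t) (𝓝 (g t)) := by
          have hset : Set.Ici t = Set.Ioi t ∪ {t} := by
            ext x
            simp only [Set.mem_Ici, Set.mem_union, Set.mem_Ioi, Set.mem_singleton_iff]
            constructor
            · intro hx; rcases hx.lt_or_eq with h | h
              · exact Or.inl h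
              · exact Or.inr h.symm
            · rintro (h | h); exacts [h.le, h.ge]
          have hle' : 𝓝[Set.Ici t] t ≤ 𝓝[>] t ⊔ pure t := by
            rw [hset, nhdsWithin_union, nhdsWithin_singleton]
          exact (tendsto_sup.mpr ⟨hrc, tendsto_pure_nhds g t⟩).mono_left hle'
        have htend : Tendsto (fun k => u (φ k)) atTop (𝓝[Set.Ici t] t) := by
          rw [tendsto_nhdsWithin_iff]
          exact ⟨hut, hev⟩
        exact tendsto_nhds_unique (hIci.comp htend) hgM
    refine ⟨t, htIcc, ?_⟩
    rw [hgt, max_eq_left (hlv_le t htIcc)]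

theorem argmaxF_continuous_at_unique_max
    (f : ℝ → ℝ) (hf : ContinuousOn f (Set.Icc 0 1))
    (τ : ℝ) (hτ : τ ∈ Set.Icc (0 : ℝ) 1)
    (huniq : ∀ t ∈ Set.Icc (0 : ℝ) 1, t ≠ τ → f t < f τ)
    (fn : ℕ → ℝ → ℝ) (hfn : ∀ n, Cadlag (fn n))
    (hconv : TendstoUniformlyOn fn f atTop (Set.Icc 0 1)) :
    Tendsto (fun n => argmaxF (fn n)) atTop (𝓝 τ) ∧ argmaxF f = τ := by
  have hfle : ∀ s ∈ Set.Icc (0:ℝ) 1, f s ≤ f τ := by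
    intro s hs
    rcases eq_or_ne s τ with h | h
    · rw [h]
    · exact (huniq s hs h).le
  have hMf : Mval f = f τ := by
    apply IsGreatest.csSup_eq
    exact ⟨⟨τ, hτ, rfl⟩, by rintro y ⟨s, hs, rfl⟩; exact hfle s hs⟩
  have hAf : Aset f = {τ} := by
    ext t
    simp only [Aset, Set.mem_sep_iff, Set.mem_singleton_iff]
    constructor
    · rintro ⟨htI, hmax⟩
      by_contra hne
      rw [leftVal_eq_of_continuousOn hf htI, max_self, hMf] at hmax
      exact absurd hmax (huniq t htI hne).ne
    · rintro rfl
      exact ⟨hτ, by rw [leftVal_eq_of_continuousOn hf hτ, max_self, hMf]⟩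
  have hargf : argmaxF f = τ := by
    rw [argmaxF, hAf, csInf_singleton]
  refine ⟨?_, hargf⟩
  rw [Metric.tendsto_nhds]
  intro ε hε
  -- key estimate set
  set K : Set ℝ := Set.Icc 0 1 ∩ {x | ε/2 ≤ |x - τ|} with hKdef
  have hKcl : IsCompact K :=
    isCompact_Icc.inter_right (isClosed_le continuous_const (continuous_id.sub continuous_const).abs)
  obtain ⟨δ, hδpos, hδK⟩ : ∃ δ : ℝ, 0 < δ ∧ ∀ t ∈ K, f t ≤ f τ - δ := by
    rcases K.eq_empty_or_nonempty with hK | hK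
    · exact ⟨1, one_pos, fun t ht => absurd (hK ▸ ht) (Set.notMem_empty t)⟩
    · obtain ⟨x, hxK, hxmax⟩ := hKcl.exists_isMaxOn hK (hf.mono Set.inter_subset_left)
      have hxτ : x ≠ τ := by
        intro h
        have := hxK.2
        rw [h] at this
        simp only [Set.mem_setOf_eq, sub_self, abs_zero] at this
        linarith
      refine ⟨f τ - f x, by linarith [huniq x hxK.1 hxτ], fun t ht => ?_⟩
      have := hxmax ht
      simp only [Set.mem_setOf_eq] at this
      linarith
  have hclose : ∀ᶠ n in atTop, ∀ s ∈ Set.Icc (0:ℝ) 1, dist (f s) (fn n s) < δ/3 :=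
    Metric.tendstoUniformlyOn_iff.mp hconv (δ/3) (by linarith)
  filter_upwards [hclose] with n hn
  set g := fn n with hgdef
  have hgc : Cadlag g := hfn n
  have hup : ∀ s ∈ Set.Icc (0:ℝ) 1, g s ≤ f s + δ/3 := by
    intro s hs
    have := hn s hs
    rw [Real.dist_eq, abs_lt] at this
    linarith [this.1]
  have hlo : ∀ s ∈ Set.Icc (0:ℝ) 1, f s - δ/3 ≤ g s := by
    intro s hs
    have := hn s hs
    rw [Real.dist_eq, abs_lt] at this
    linarith [this.2]
  have hbdd : BddAbove (g '' Set.Icc 0 1) := by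
    refine ⟨f τ + δ/3, ?_⟩
    rintro y ⟨s, hs, rfl⟩
    linarith [hup s hs, hfle s hs]
  have hMg : f τ - δ/3 ≤ Mval g :=
    le_trans (hlo τ hτ) (le_csSup hbdd ⟨τ, hτ, rfl⟩)
  have hAne : (Aset g).Nonempty := Aset_nonempty hgc hbdd
  have hAsub : ∀ t ∈ Aset g, |t - τ| ≤ ε/2 := by
    intro t ht
    obtain ⟨htI, hmax⟩ := ht
    by_contra hcon
    push_neg at hcon
    have htK : t ∈ K := ⟨htI, by simp only [Set.mem_setOf_eq]; linarith⟩
    have hft : f t ≤ f τ - δ := hδK t htK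
    have hgt : g t ≤ f τ - δ + δ/3 := by linarith [hup t htI]
    have hlv : leftVal g t ≤ f τ - δ + δ/3 := by
      rcases eq_or_ne t 0 with h | h
      · rw [h, leftVal, if_pos rfl]
        have h0K : (0:ℝ) ∈ Set.Icc (0:ℝ) 1 := by norm_num
        have := hup 0 h0K
        have hf0 : f 0 ≤ f τ - δ := h ▸ hft
        linarith
      · have ht' : t ∈ Set.Ioc (0:ℝ) 1 := ⟨htI.1.lt_of_ne (Ne.symm h), htI.2⟩
        have hftend : Tendsto (fun s => f s + δ/3) (𝓝[<] t) (𝓝 (f t + δ/3)) :=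
          (left_tendsto_of_continuousOn hf ht').add_const _
        have := leftVal_le_of_tendsto hgc ht' hftend
          (fun s hs => hup s ⟨hs.1.le, hs.2.le.trans ht'.2⟩)
        linarith
    have : max (g t) (leftVal g t) < Mval g := by
      rw [max_lt_iff]
      constructor <;> [skip; skip] <;>
        first
          | (calc g t ≤ f τ - δ + δ/3 := hgt
              _ < f τ - δ/3 := by linarith
              _ ≤ Mval g := hMg)
          | (calc leftVal g t ≤ f τ - δ + δ/3 := hlv
              _ < f τ - δ/3 := by linarith
              _ ≤ Mval g := hMg)
    exact absurd hmax this.ne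
  obtain ⟨a0, ha0⟩ := hAne
  have hbddB : BddBelow (Aset g) := ⟨0, fun x hx => hx.1.1⟩
  have h1 : τ - ε/2 ≤ sInf (Aset g) := by
    apply le_csInf ⟨a0, ha0⟩
    intro b hb
    have := hAsub b hb
    rw [abs_le] at this
    linarith [this.1]
  have h2 : sInf (Aset g) ≤ τ + ε/2 := by
    have := hAsub a0 ha0
    rw [abs_le] at this
    calc sInf (Aset g) ≤ a0 := csInf_le hbddB ha0
      _ ≤ τ + ε/2 := by linarith [this.2]
  show dist (argmaxF g) τ < ε
  rw [argmaxF, Real.dist_eq, abs_lt]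
  constructor <;> linarith
end

section
/- Let D := F − F_0 and Q(x) := D(x)/√(F_0(x)(1−F_0(x))) for x with 0 < F_0(x) < 1. Then τ is a maximizing point of both D and Q; more precisely M := sup_{x∈ℝ} D(x) = D(τ) = (δ−β)·F_0(τ)·(1−F_0(τ)) and S := sup_{x : 0<F_0(x)<1} Q(x) = Q(τ) = (δ−β)·√(F_0(τ)(1−F_0(τ))), and M < S. -/
open Filter Topology

theorem tau_maximizes_D_and_Q
    (F0 : ℝ → ℝ) (hmono : Monotone F0) (hcont : Continuous F0)
    (hbot : Tendsto F0 atBot (𝓝 0)) (htop : Tendsto F0 atTop (𝓝 1))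
    (τ : ℝ) (hτ0 : 0 < F0 τ) (hτ1 : F0 τ < 1)
    (δ : ℝ) (hδ : 1 < δ) (hδτ : δ * F0 τ < 1)
    (β : ℝ) (hβ : β = (1 - δ * F0 τ) / (1 - F0 τ))
    (F : ℝ → ℝ)
    (hF : ∀ x, F x = if x ≤ τ then δ * F0 x else β * (F0 x - F0 τ) + δ * F0 τ)
    (D : ℝ → ℝ) (hD : ∀ x, D x = F x - F0 x)
    (Q : ℝ → ℝ) (hQ : ∀ x, Q x = D x / Real.sqrt (F0 x * (1 - F0 x))) :
    D τ = (δ - β) * F0 τ * (1 - F0 τ) ∧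
      IsGreatest (Set.range D) ((δ - β) * F0 τ * (1 - F0 τ)) ∧
      Q τ = (δ - β) * Real.sqrt (F0 τ * (1 - F0 τ)) ∧
      IsGreatest (Q '' {x | 0 < F0 x ∧ F0 x < 1})
        ((δ - β) * Real.sqrt (F0 τ * (1 - F0 τ))) ∧
      (δ - β) * F0 τ * (1 - F0 τ) < (δ - β) * Real.sqrt (F0 τ * (1 - F0 τ)) := by
  set t := F0 τ with ht
  have ht1' : 0 < 1 - t := by linarith
  have hβ1t : β * (1 - t) = 1 - δ * t := by
    rw [hβ]; field_simp
  have h1 : (δ - β) * (1 - t) = δ - 1 := by linear_combination -hβ1t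
  have h2 : 1 - β = (δ - β) * t := by linear_combination -hβ1t
  have hc : 0 < δ - β := by
    have : δ - β = (δ - 1) / (1 - t) := by
      field_simp; linarith [h1]
    rw [this]; exact div_pos (by linarith) ht1'
  -- explicit formulas for D
  have hDle : ∀ x, x ≤ τ → D x = (δ - β) * (F0 x * (1 - t)) := by
    intro x hx
    rw [hD, hF, if_pos hx]
    linear_combination (-(F0 x)) * h1
  have hDgt : ∀ x, ¬ x ≤ τ → D x = (δ - β) * (t * (1 - F0 x)) := by
    intro x hx
    rw [hD, hF, if_neg hx]
    linear_combination (-(F0 x)) * h2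
  have hDτ : D τ = (δ - β) * F0 τ * (1 - F0 τ) := by
    rw [hDle τ le_rfl]; ring
  -- sqrt at τ
  have htt0 : 0 < t * (1 - t) := mul_pos hτ0 ht1'
  have hsτ : 0 < Real.sqrt (t * (1 - t)) := Real.sqrt_pos.2 htt0
  have hQτ : Q τ = (δ - β) * Real.sqrt (F0 τ * (1 - F0 τ)) := by
    have hss : Real.sqrt (t * (1 - t)) * Real.sqrt (t * (1 - t)) = t * (1 - t) :=
      Real.mul_self_sqrt htt0.le
    rw [hQ, hDτ, ← ht, div_eq_iff (ne_of_gt hsτ)]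
    linear_combination (-(δ - β)) * hss
  refine ⟨hDτ, ⟨⟨τ, hDτ⟩, ?_⟩, hQτ, ⟨⟨τ, ⟨hτ0, hτ1⟩, hQτ⟩, ?_⟩, ?_⟩
  · -- upper bound for D
    rintro y ⟨x, rfl⟩
    by_cases hx : x ≤ τ
    · have := hmono hx
      rw [hDle x hx]
      nlinarith [mul_nonneg (mul_nonneg hc.le ht1'.le) (sub_nonneg.2 this)]
    · have : t ≤ F0 x := hmono (le_of_not_ge hx)
      rw [hDgt x hx]
      nlinarith [mul_nonneg (mul_nonneg hc.le hτ0.le) (sub_nonneg.2 this)]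
  · -- upper bound for Q
    rintro y ⟨x, ⟨hx0, hx1⟩, rfl⟩
    have hs0 : 0 < F0 x * (1 - F0 x) := mul_pos hx0 (by linarith)
    have hs : 0 < Real.sqrt (F0 x * (1 - F0 x)) := Real.sqrt_pos.2 hs0
    rw [hQ, div_le_iff₀ hs]
    by_cases hx : x ≤ τ
    · have hab : F0 x ≤ t := hmono hx
      rw [hDle x hx]
      have key : F0 x * (1 - t) ≤ Real.sqrt (t * (1 - t)) * Real.sqrt (F0 x * (1 - F0 x)) := by
        rw [← Real.sqrt_mul htt0.le]
        rw [show F0 x * (1 - t) = Real.sqrt ((F0 x * (1 - t))^2) from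
          (Real.sqrt_sq (by nlinarith)).symm]
        apply Real.sqrt_le_sqrt
        nlinarith [mul_nonneg (mul_nonneg hx0.le ht1'.le) (sub_nonneg.2 hab)]
      calc (δ - β) * (F0 x * (1 - t))
          ≤ (δ - β) * (Real.sqrt (t * (1 - t)) * Real.sqrt (F0 x * (1 - F0 x))) :=
            by exact mul_le_mul_of_nonneg_left key hc.le
        _ = (δ - β) * Real.sqrt (t * (1 - t)) * Real.sqrt (F0 x * (1 - F0 x)) := by ring
    · have hab : t ≤ F0 x := hmono (le_of_not_ge hx)
      rw [hDgt x hx]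
      have key : t * (1 - F0 x) ≤ Real.sqrt (t * (1 - t)) * Real.sqrt (F0 x * (1 - F0 x)) := by
        rw [← Real.sqrt_mul htt0.le]
        rw [show t * (1 - F0 x) = Real.sqrt ((t * (1 - F0 x))^2) from
          (Real.sqrt_sq (by nlinarith)).symm]
        apply Real.sqrt_le_sqrt
        nlinarith [mul_nonneg (mul_nonneg hτ0.le (by linarith : (0:ℝ) ≤ 1 - F0 x)) (sub_nonneg.2 hab)]
      calc (δ - β) * (t * (1 - F0 x))
          ≤ (δ - β) * (Real.sqrt (t * (1 - t)) * Real.sqrt (F0 x * (1 - F0 x))) :=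
            mul_le_mul_of_nonneg_left key hc.le
        _ = (δ - β) * Real.sqrt (t * (1 - t)) * Real.sqrt (F0 x * (1 - F0 x)) := by ring
  · -- M < S
    have hu1 : t * (1 - t) < 1 := by nlinarith
    have hs1 : Real.sqrt (t * (1 - t)) < 1 := by
      nlinarith [Real.sq_sqrt htt0.le, hu1, sq_nonneg (Real.sqrt (t * (1 - t)) - 1)]
    have hlt : t * (1 - t) < Real.sqrt (t * (1 - t)) := by
      nlinarith [Real.sq_sqrt htt0.le, mul_pos hsτ (sub_pos.mpr hs1)]
    calc (δ - β) * F0 τ * (1 - F0 τ) = (δ - β) * (t * (1 - t)) := by rw [← ht]; ring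
      _ < (δ - β) * Real.sqrt (t * (1 - t)) := by
          exact mul_lt_mul_of_pos_left hlt hc
end

section
/- Let D := F − F_0 and Q^*(x) := D(x)/√(F_0(τ)(1−F_0(τ))) for x ∈ ℝ. Then sup_{x∈ℝ} Q^*(x) = Q^*(τ) = (δ−β)·√(F_0(τ)(1−F_0(τ))) = sup_{x : 0<F_0(x)<1} D(x)/√(F_0(x)(1−F_0(x))); i.e., the supremum of the constant-weighted process Q^* equals the supremum S of the standardized process Q. -/
open Filter Topology

lemma ratio_sqrt (q : ℝ) (hq : 0 < q) (hq1 : q < 1) :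
    q / Real.sqrt (q * (1 - q)) = Real.sqrt q / Real.sqrt (1 - q) := by
  rw [Real.sqrt_mul hq.le, div_mul_eq_div_div, Real.div_sqrt]

lemma ratio_sqrt' (q : ℝ) (hq : 0 < q) (hq1 : q < 1) :
    (1 - q) / Real.sqrt (q * (1 - q)) = Real.sqrt (1 - q) / Real.sqrt q := by
  rw [mul_comm, Real.sqrt_mul (by linarith), div_mul_eq_div_div, Real.div_sqrt]

theorem sup_Qstar_eq_sup_Q
    (F0 : ℝ → ℝ) (hmono : Monotone F0) (hcont : Continuous F0)
    (hbot : Tendsto F0 atBot (𝓝 0)) (htop : Tendsto F0 atTop (𝓝 1))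
    (τ : ℝ) (hτ0 : 0 < F0 τ) (hτ1 : F0 τ < 1)
    (δ : ℝ) (hδ : 1 < δ) (hδτ : δ * F0 τ < 1)
    (β : ℝ) (hβ : β = (1 - δ * F0 τ) / (1 - F0 τ))
    (F : ℝ → ℝ)
    (hF : ∀ x, F x = if x ≤ τ then δ * F0 x else β * (F0 x - F0 τ) + δ * F0 τ)
    (D : ℝ → ℝ) (hD : ∀ x, D x = F x - F0 x)
    (Qstar : ℝ → ℝ) (hQstar : ∀ x, Qstar x = D x / Real.sqrt (F0 τ * (1 - F0 τ))) :
    Qstar τ = (δ - β) * Real.sqrt (F0 τ * (1 - F0 τ)) ∧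
      IsGreatest (Set.range Qstar) ((δ - β) * Real.sqrt (F0 τ * (1 - F0 τ))) ∧
      IsGreatest ((fun x => D x / Real.sqrt (F0 x * (1 - F0 x))) '' {x | 0 < F0 x ∧ F0 x < 1})
        ((δ - β) * Real.sqrt (F0 τ * (1 - F0 τ))) := by
  set p := F0 τ with hp
  have hp1 : 0 < 1 - p := by linarith
  have hs : 0 < Real.sqrt (p * (1 - p)) := Real.sqrt_pos.mpr (by positivity)
  have hss : Real.sqrt (p * (1 - p)) * Real.sqrt (p * (1 - p)) = p * (1 - p) :=
    Real.mul_self_sqrt (by positivity)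
  have hβlt : β < 1 := by
    rw [hβ, div_lt_one hp1]; nlinarith
  have hδβ : (δ - β) * (1 - p) = δ - 1 := by
    rw [hβ]; field_simp; ring
  have hDτ : D τ = (δ - 1) * p := by
    rw [hD, hF]; simp; ring
  have hDle : ∀ x, D x ≤ (δ - 1) * p := by
    intro x
    rw [hD, hF]
    by_cases hx : x ≤ τ
    · rw [if_pos hx]
      have := hmono hx
      nlinarith
    · rw [if_neg hx]
      have := hmono (le_of_not_ge hx)
      nlinarith
  have hDgt : ∀ x, τ < x → D x = (1 - β) * (1 - F0 x) := by
    intro x hx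
    rw [hD, hF, if_neg (not_le.mpr hx)]
    linear_combination -hδβ
  have hV : (δ - β) * Real.sqrt (p * (1 - p)) = (δ - 1) * p / Real.sqrt (p * (1 - p)) := by
    rw [eq_div_iff hs.ne']; nlinarith
  have h1 : Qstar τ = (δ - β) * Real.sqrt (p * (1 - p)) := by
    rw [hQstar, hDτ, hV]
  refine ⟨h1, ⟨⟨τ, h1⟩, ?_⟩, ⟨⟨τ, ⟨hτ0, hτ1⟩, by simp only; rw [hDτ, ← hV]⟩, ?_⟩⟩
  · rintro y ⟨x, rfl⟩
    rw [hQstar, hV]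
    gcongr
    exact hDle x
  · rintro y ⟨x, ⟨hx0, hx1⟩, rfl⟩
    simp only
    set q := F0 x with hq
    have hq1 : 0 < 1 - q := by linarith
    have hsq : 0 < Real.sqrt (q * (1 - q)) := Real.sqrt_pos.mpr (by positivity)
    rw [hV]
    by_cases hx : x ≤ τ
    · have hqp : q ≤ p := hmono hx
      have hDx : D x = (δ - 1) * q := by
        rw [hD, hF, if_pos hx]; ring
      rw [hDx, mul_div_assoc, mul_div_assoc, ratio_sqrt q hx0 hx1, ratio_sqrt p hτ0 hτ1]
      gcongr
      all_goals first
        | exact Real.sqrt_pos.mpr hp1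
        | exact Real.sqrt_le_sqrt hqp
        | exact Real.sqrt_le_sqrt (by linarith)
        | linarith
    · have hpq : p ≤ q := hmono (le_of_not_ge hx)
      rw [hDgt x (not_le.mp hx)]
      have h1mb : (1 - β) * (1 - p) = (δ - 1) * p := by
        rw [hβ]; field_simp; ring
      have hV2 : (δ - 1) * p / Real.sqrt (p * (1 - p))
          = (1 - β) * ((1 - p) / Real.sqrt (p * (1 - p))) := by
        rw [← h1mb, mul_div_assoc]
      rw [hV2, mul_div_assoc, ratio_sqrt' q hx0 hx1, ratio_sqrt' p hτ0 hτ1]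
      gcongr
      all_goals first
        | exact Real.sqrt_pos.mpr hτ0
        | exact Real.sqrt_le_sqrt hpq
        | exact Real.sqrt_le_sqrt (by linarith)
        | linarith
end
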